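/- Multihead self-attention is equivariant under row permutations: fix d > 0, a finite index set of heads H, and for each head h weight matrices W_Q h, W_K h : Matrix (Fin m) (Fin d) ℝ, W_V h : Matrix (Fin m) (Fin d') ℝ, and output projections W_O h : Matrix (Fin d') (Fin m) ℝ. Define MHSA(S) = Σ_{h ∈ H} Att_h(S) * W_O h, where Att_h(S) = A_h * (S * W_V h) and A_h i j = exp(((S*W_Q h)*(S*W_K h)ᵀ i j)/√d) / Σ_{l} exp(((S*W_Q h)*(S*W_K h)ᵀ i l)/√d). Then MHSA(π · S) = π · MHSA(S) for every permutation π of Fin n and every S : Matrix (Fin n) (Fin m) ℝ. -/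

import Mathlib

open Matrix in
/-- Single-head self-attention: `Att(S) = A * (S * W_V)` where `A` is the
row-wise softmax of `(1/√d) * (S * W_Q) * (S * W_K)ᵀ`. -/
noncomputable def selfAttention {n m d d' : ℕ}
    (WQ WK : Matrix (Fin m) (Fin d) ℝ) (WV : Matrix (Fin m) (Fin d') ℝ)
    (S : Matrix (Fin n) (Fin m) ℝ) : Matrix (Fin n) (Fin d') ℝ :=
  (Matrix.of fun i j =>
      Real.exp ((((S * WQ) * (S * WK)ᵀ) i j) / Real.sqrt d) /
        ∑ l, Real.exp ((((S * WQ) * (S * WK)ᵀ) i l) / Real.sqrt d)) * (S * WV)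

/-- Multihead self-attention: per-head attention outputs are combined by
per-head output projections `W_O h` and summed over the finite set of heads. -/
noncomputable def multiheadSelfAttention {n m d d' : ℕ} {H : Type*} [Fintype H]
    (WQ WK : H → Matrix (Fin m) (Fin d) ℝ) (WV : H → Matrix (Fin m) (Fin d') ℝ)
    (WO : H → Matrix (Fin d') (Fin m) ℝ)
    (S : Matrix (Fin n) (Fin m) ℝ) : Matrix (Fin n) (Fin m) ℝ :=
  ∑ h, selfAttention (WQ h) (WK h) (WV h) S * WO h

/-- Multihead self-attention is equivariant under row permutations:
`MHSA(π · S) = π · MHSA(S)`, where `(π · S) i j = S (π⁻¹ i) j`. -/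
theorem multiheadSelfAttention_row_permutation_equivariant
    {n m d d' : ℕ} {H : Type*} [Fintype H] (hd : 0 < d)
    (WQ WK : H → Matrix (Fin m) (Fin d) ℝ) (WV : H → Matrix (Fin m) (Fin d') ℝ)
    (WO : H → Matrix (Fin d') (Fin m) ℝ)
    (π : Equiv.Perm (Fin n)) (S : Matrix (Fin n) (Fin m) ℝ) :
    multiheadSelfAttention WQ WK WV WO (Matrix.of fun i j => S (π⁻¹ i) j) =
      Matrix.of fun i j => multiheadSelfAttention WQ WK WV WO S (π⁻¹ i) j := by
  have key : ∀ (Q K : Matrix (Fin m) (Fin d) ℝ) (V : Matrix (Fin m) (Fin d') ℝ),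
      selfAttention Q K V (Matrix.of fun i j => S (π⁻¹ i) j) =
        Matrix.of fun i j => selfAttention Q K V S (π⁻¹ i) j := by
    intro Q K V
    set L : Matrix (Fin n) (Fin n) ℝ := (S * Q) * (S * K).transpose with hLdef
    set A : Matrix (Fin n) (Fin n) ℝ := Matrix.of fun i j =>
      Real.exp (L i j / Real.sqrt d) / ∑ l, Real.exp (L i l / Real.sqrt d) with hAdef
    have hS' : (Matrix.of fun i j => S (π⁻¹ i) j) = S.submatrix ⇑π⁻¹ id := rfl
    have hmul : ∀ (k : ℕ) (W : Matrix (Fin m) (Fin k) ℝ),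
        (S.submatrix ⇑π⁻¹ id) * W = (S * W).submatrix ⇑π⁻¹ id := by
      intro k W
      ext i j
      simp [Matrix.mul_apply]
    have hL : (S.submatrix ⇑π⁻¹ id * Q) * (S.submatrix ⇑π⁻¹ id * K).transpose =
        L.submatrix ⇑π⁻¹ ⇑π⁻¹ := by
      rw [hmul, hmul]
      ext i j
      simp [Matrix.mul_apply, hLdef]
    have hA : (Matrix.of fun i j =>
        Real.exp ((L.submatrix ⇑π⁻¹ ⇑π⁻¹) i j / Real.sqrt d) /
          ∑ l, Real.exp ((L.submatrix ⇑π⁻¹ ⇑π⁻¹) i l / Real.sqrt d)) =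
        A.submatrix ⇑π⁻¹ ⇑π⁻¹ := by
      ext i j
      have : (∑ l, Real.exp (L (π⁻¹ i) (π⁻¹ l) / Real.sqrt d)) =
          ∑ l, Real.exp (L (π⁻¹ i) l / Real.sqrt d) :=
        Equiv.sum_comp π⁻¹ fun l => Real.exp (L (π⁻¹ i) l / Real.sqrt d)
      simp [hAdef, this]
      exact congrArg _ this
    show (Matrix.of fun i j =>
        Real.exp ((((S.submatrix ⇑π⁻¹ id * Q) * (S.submatrix ⇑π⁻¹ id * K).transpose) i j)
            / Real.sqrt d) /
          ∑ l, Real.exp ((((S.submatrix ⇑π⁻¹ id * Q) * (S.submatrix ⇑π⁻¹ id * K).transpose) i l)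
            / Real.sqrt d)) * (S.submatrix ⇑π⁻¹ id * V) =
      Matrix.of fun i j => (A * (S * V)) (π⁻¹ i) j
    rw [hL, hmul, hA, Matrix.submatrix_mul_equiv A (S * V) ⇑π⁻¹ π⁻¹ id]
    rfl
  ext i j
  simp only [multiheadSelfAttention, Matrix.sum_apply, Matrix.of_apply, key,
    Matrix.mul_apply]
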